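/- Let q be a prime power and let F be a finite field with exactly q^2 elements. Then the number of pairs (x,y) in F × F satisfying y^q + y = x^{q+1} is exactly q^3. (That is, the affine Hermitian curve over F has exactly q^3 rational points.) -/

import Mathlib

open Finset Polynomial

/-- Number of roots of a nonzero polynomial is at most its natDegree. -/
lemma root_count_le {F : Type*} [Field F] [Fintype F] [DecidableEq F]
    (P : Polynomial F) (hP : P ≠ 0) :
    (Finset.univ.filter (fun y : F => P.eval y = 0)).card ≤ P.natDegree := by
  have h1 : (Finset.univ.filter (fun y : F => P.eval y = 0)) ⊆ P.roots.toFinset := by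
    intro y hy
    rw [Multiset.mem_toFinset, Polynomial.mem_roots hP]
    exact (Finset.mem_filter.mp hy).2
  calc (Finset.univ.filter (fun y : F => P.eval y = 0)).card
      ≤ P.roots.toFinset.card := Finset.card_le_card h1
    _ ≤ Multiset.card P.roots := Multiset.toFinset_card_le _
    _ ≤ P.natDegree := P.card_roots' 

/-- The affine Hermitian curve `y^q + y = x^(q+1)` over the finite field `F`
with `q^2` elements has exactly `q^3` rational points. -/
theorem hermitian_affine_point_count (q : ℕ) (hq : IsPrimePow q)
    (F : Type*) [Field F] [Fintype F] (hF : Fintype.card F = q ^ 2) :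
    Nat.card {p : F × F // p.2 ^ q + p.2 = p.1 ^ (q + 1)} = q ^ 3 := by
  classical
  obtain ⟨p, k, hp, hk, rfl⟩ := hq
  have hp' : Nat.Prime p := hp.nat_prime
  haveI := Fact.mk hp'
  set q := p ^ k with hqdef
  have hq1 : 0 < q := Nat.pow_pos hp'.pos
  have hq2 : 2 ≤ q := le_trans hp'.two_le (Nat.le_self_pow hk.ne' p)
  -- characteristic of F is p
  haveI : CharP F (ringChar F) := ringChar.charP F
  obtain ⟨n, hc, hcard⟩ := FiniteField.card F (ringChar F)
  have hpc : ringChar F = p := by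
    have hdvd : p ∣ ringChar F ^ (n : ℕ) := by
      rw [← hcard, hF, hqdef, ← pow_mul]
      exact dvd_pow_self p (by positivity)
    have := hp'.dvd_of_dvd_pow hdvd
    exact ((Nat.prime_dvd_prime_iff_eq hp' hc).mp this).symm
  haveI hcharp : CharP F p := by rw [← hpc]; exact ringChar.charP F
  -- Frobenius facts
  have hfrob : ∀ a b : F, (a + b) ^ q = a ^ q + b ^ q := fun a b =>
    add_pow_char_pow a b p k
  have hsub : ∀ a b : F, (a - b) ^ q = a ^ q - b ^ q := by
    intro a b
    have h := hfrob (a - b) b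
    rw [sub_add_cancel] at h
    linear_combination -h
  have hpow : ∀ y : F, y ^ (q ^ 2) = y := fun y => by
    rw [← hF]; exact FiniteField.pow_card y
  have hfix : ∀ y : F, (y ^ q + y) ^ q = y ^ q + y := by
    intro y
    rw [hfrob, ← pow_mul, ← pow_two, hpow, add_comm]
  have hnorm : ∀ x : F, (x ^ (q + 1)) ^ q = x ^ (q + 1) := by
    intro x
    rw [← pow_mul]
    have h : (q + 1) * q = q ^ 2 + q := by ring
    rw [h, pow_add, hpow, pow_add, pow_one, mul_comm]
  -- key finsets
  set K : Finset F := Finset.univ.filter (fun y : F => y ^ q + y = 0) with hK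
  set Fix : Finset F := Finset.univ.filter (fun z : F => z ^ q = z) with hFix
  set Im : Finset F := Finset.univ.image (fun y : F => y ^ q + y) with hIm
  have hq_ne_one : q ≠ 1 := by omega
  -- card bounds via polynomials
  have hKle : K.card ≤ q := by
    have hPne : (X ^ q + X : Polynomial F) ≠ 0 := by
      intro h
      have h2 := congrArg (fun P : Polynomial F => Polynomial.coeff P q) h
      simp only [Polynomial.coeff_add, Polynomial.coeff_X_pow, Polynomial.coeff_X,
        Polynomial.coeff_zero, if_pos rfl] at h2
      rw [if_neg (by omega : ¬ (1 : ℕ) = q)] at h2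
      simp at h2
    have := root_count_le (X ^ q + X : Polynomial F) hPne
    have hdeg : (X ^ q + X : Polynomial F).natDegree ≤ q := by
      refine le_trans (Polynomial.natDegree_add_le _ _) ?_
      simp [Polynomial.natDegree_X_pow, Polynomial.natDegree_X]
      omega
    refine le_trans (le_trans (Finset.card_le_card ?_) this) hdeg
    intro y hy
    simp only [hK, Finset.mem_filter, Finset.mem_univ, true_and] at hy ⊢
    simp [hy]
  have hFixle : Fix.card ≤ q := by
    have hPne : (X ^ q - X : Polynomial F) ≠ 0 := by
      intro h
      have h2 := congrArg (fun P : Polynomial F => Polynomial.coeff P q) h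
      simp only [Polynomial.coeff_sub, Polynomial.coeff_X_pow, Polynomial.coeff_X,
        Polynomial.coeff_zero, if_pos rfl] at h2
      rw [if_neg (by omega : ¬ (1 : ℕ) = q)] at h2
      simp at h2
    have := root_count_le (X ^ q - X : Polynomial F) hPne
    have hdeg : (X ^ q - X : Polynomial F).natDegree ≤ q := by
      refine le_trans (Polynomial.natDegree_sub_le _ _) ?_
      simp [Polynomial.natDegree_X_pow, Polynomial.natDegree_X]
      omega
    refine le_trans (le_trans (Finset.card_le_card ?_) this) hdeg
    intro y hy
    simp only [hFix, Finset.mem_filter, Finset.mem_univ, true_and] at hy ⊢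
    simp [sub_eq_zero, hy]
  have hImFix : Im ⊆ Fix := by
    intro c hc
    obtain ⟨y, -, rfl⟩ := Finset.mem_image.mp (hIm ▸ hc)
    simp only [hFix, Finset.mem_filter, Finset.mem_univ, true_and]
    exact hfix y
  -- each fiber over the image has the same size as K
  have hfiber : ∀ c ∈ Im, (Finset.univ.filter (fun y : F => y ^ q + y = c)).card = K.card := by
    intro c hc
    obtain ⟨y₀, -, rfl⟩ := Finset.mem_image.mp (hIm ▸ hc)
    apply Finset.card_bij' (fun y _ => y - y₀) (fun z _ => z + y₀)
    · intro y hy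
      simp only [hK, Finset.mem_filter, Finset.mem_univ, true_and] at hy ⊢
      rw [hsub]
      linear_combination hy
    · intro z hz
      simp only [hK, Finset.mem_filter, Finset.mem_univ, true_and] at hz ⊢
      rw [hfrob]
      linear_combination hz
    · intro y _; ring
    · intro z _; ring
  -- q^2 = Im.card * K.card
  have hcount : q ^ 2 = Im.card * K.card := by
    have h1 := Finset.card_eq_sum_card_image (fun y : F => y ^ q + y) (Finset.univ : Finset F)
    rw [Finset.card_univ, hF, ← hIm] at h1
    rw [h1, Finset.sum_congr rfl hfiber, Finset.sum_const, smul_eq_mul]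
  have hKq : K.card = q := by
    have hIm0 : Im.Nonempty := ⟨0 ^ q + 0, Finset.mem_image.mpr ⟨0, Finset.mem_univ _, rfl⟩⟩
    have hImle : Im.card ≤ q := le_trans (Finset.card_le_card hImFix) hFixle
    nlinarith [hcount, hImle, hKle, Finset.card_pos.mpr hIm0]
  have hImq : Im.card = q := by nlinarith [hcount, hKle, hKq]
  -- Im = Fix
  have hImEq : Im = Fix := Finset.eq_of_subset_of_card_le hImFix (by omega)
  -- every x^(q+1) is in the image
  have hx : ∀ x : F, x ^ (q + 1) ∈ Im := by
    intro x
    rw [hImEq]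
    simp only [hFix, Finset.mem_filter, Finset.mem_univ, true_and]
    exact hnorm x
  -- main count
  rw [Nat.card_eq_fintype_card]
  rw [Fintype.card_congr (Equiv.subtypeProdEquivSigmaSubtype (fun x y : F => y ^ q + y = x ^ (q + 1)))]
  rw [Fintype.card_sigma]
  have : ∀ x : F, Fintype.card {y : F // y ^ q + y = x ^ (q + 1)} = q := by
    intro x
    rw [Fintype.card_subtype]
    rw [hfiber _ (hx x), hKq]
  simp only [this, Finset.sum_const, Finset.card_univ, hF, smul_eq_mul]
  ring
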